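/- There exists a constant C > 0 such that for all ε, τ, t with 0 < ε ≤ τ ≤ t/2, one has | ∫_{B_τ(te₁)} ∇U_{ε,te₁}(y)·∇U_{ε,−te₁}(y) dy | ≤ C·ε²·τ/t³. -/

import Mathlib

noncomputable section

open MeasureTheory Real RealInnerProductSpace

/-- Euclidean four-space. -/
abbrev E4 : Type := EuclideanSpace ℝ (Fin 4)

/-- The normalizing constant `c₄ = (6/π²)^(1/4)`. -/
def c4 : ℝ := (6 / Real.pi ^ 2) ^ ((1 : ℝ) / 4)

/-- The Sobolev constant `S₄ = 8/c₄²`. -/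
def S4 : ℝ := 8 / c4 ^ 2

/-- The standard (normalized) bubble `U(x) = c₄ (1+|x|²)⁻¹`. -/
def Ubub (x : E4) : ℝ := c4 * (1 + ‖x‖ ^ 2)⁻¹

/-- The rescaled/translated bubble `U_{ε,x₀}(x) = ε⁻¹ U((x - x₀)/ε)`. -/
def Ueps (ε : ℝ) (x₀ : E4) (x : E4) : ℝ := ε⁻¹ * Ubub (ε⁻¹ • (x - x₀))

/-- The double bubble `Û_{ε,x₀} = U_{ε,x₀} + U_{ε,-x₀}`. -/
def Uhat (ε : ℝ) (x₀ : E4) (x : E4) : ℝ := Ueps ε x₀ x + Ueps ε (-x₀) x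

/-- The first standard basis vector of `ℝ⁴`. -/
def e1 : E4 := EuclideanSpace.single (0 : Fin 4) (1 : ℝ)

/-- The Yamabe (Sobolev) quotient `Q(u) = 6 ∫ |∇u|² / (∫ u⁴)^{1/2}` on `ℝ⁴`. -/
def Qyam (u : E4 → ℝ) : ℝ :=
  6 * (∫ x : E4, ‖gradient u x‖ ^ 2) / Real.sqrt (∫ x : E4, (u x) ^ 4)

open Set intervalIntegral


lemma oneD_int0 (τ : ℝ) (hτ : 0 ≤ τ) :
    IntervalIntegrable (fun s : ℝ => |s| ^ (-(3:ℝ)/4)) volume 0 τ := by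
  rw [intervalIntegrable_iff, uIoc_of_le hτ]
  refine ((intervalIntegrable_rpow' (r := -(3:ℝ)/4) (by norm_num)
      (a := 0) (b := τ)).1).congr_fun ?_ measurableSet_Ioc
  intro x hx
  simp [abs_of_pos hx.1]

lemma oneD_intneg (τ : ℝ) (hτ : 0 ≤ τ) :
    IntervalIntegrable (fun s : ℝ => |s| ^ (-(3:ℝ)/4)) volume (-τ) 0 := by
  rw [IntervalIntegrable.iff_comp_neg]
  simpa using (oneD_int0 τ hτ).symm

lemma oneD_intInt (τ : ℝ) (hτ : 0 ≤ τ) :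
    IntervalIntegrable (fun s : ℝ => |s| ^ (-(3:ℝ)/4)) volume (-τ) τ :=
  (oneD_intneg τ hτ).trans (oneD_int0 τ hτ)

lemma oneD_val (τ : ℝ) (hτ : 0 ≤ τ) :
    ∫ x in (-τ)..τ, |x| ^ (-(3:ℝ)/4) = 8 * τ ^ ((1:ℝ)/4) := by
  have h0 : ∫ x in (0:ℝ)..τ, |x| ^ (-(3:ℝ)/4) = 4 * τ ^ ((1:ℝ)/4) := by
    rw [integral_congr (g := fun x : ℝ => x ^ (-(3:ℝ)/4)) ?_]
    · rw [integral_rpow (by norm_num)]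
      norm_num [Real.zero_rpow]
      ring
    · intro x hx
      rw [uIcc_of_le hτ] at hx
      simp [abs_of_nonneg hx.1]
  have hneg : ∫ x in (-τ)..(0:ℝ), |x| ^ (-(3:ℝ)/4) = 4 * τ ^ ((1:ℝ)/4) := by
    have := integral_comp_neg (a := -τ) (b := 0) (fun x : ℝ => |x| ^ (-(3:ℝ)/4))
    simp only [abs_neg] at this
    rw [this]
    simpa using h0
  rw [← integral_add_adjacent_intervals (oneD_intneg τ hτ) (oneD_int0 τ hτ), h0, hneg]
  ring

lemma oneD_shift_integrable (a τ : ℝ) (hτ : 0 ≤ τ) :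
    IntegrableOn (fun s : ℝ => |s - a| ^ (-(3:ℝ)/4)) (Icc (a-τ) (a+τ)) volume := by
  have h := ((oneD_intInt τ hτ).comp_sub_right a)
  rw [intervalIntegrable_iff_integrableOn_Icc_of_le (by linarith)] at h
  have : Icc (a-τ) (a+τ) = Icc (-τ+a) (τ+a) := by ring_nf
  rw [this]
  exact h

lemma oneD_shift_val (a τ : ℝ) (hτ : 0 ≤ τ) :
    ∫ s in Icc (a-τ) (a+τ), |s - a| ^ (-(3:ℝ)/4) = 8 * τ ^ ((1:ℝ)/4) := by
  rw [integral_Icc_eq_integral_Ioc, ← intervalIntegral.integral_of_le (by linarith : a-τ ≤ a+τ)]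
  have := integral_comp_sub_right (a := a-τ) (b := a+τ) (fun x : ℝ => |x| ^ (-(3:ℝ)/4)) a
  rw [this]
  have h1 : a - τ - a = -τ := by ring
  have h2 : a + τ - a = τ := by ring
  rw [h1, h2, oneD_val τ hτ]

lemma oneD_cont_integrable (a b τ : ℝ) (hb : 0 < b) :
    IntegrableOn (fun s : ℝ => ((b + (s-a)^2) ^ ((3:ℝ)/8))⁻¹) (Icc (a-τ) (a+τ)) volume := by
  apply Continuous.integrableOn_Icc
  have hc : Continuous fun s : ℝ => (b + (s-a)^2) ^ ((3:ℝ)/8) :=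
    Continuous.rpow_const (by continuity) (fun x => Or.inr (by norm_num))
  exact hc.inv₀ (fun x => ne_of_gt (Real.rpow_pos_of_pos (by positivity) _))

lemma oneD_bound (a b τ : ℝ) (hb : 0 < b) (hτ : 0 ≤ τ) :
    ∫ s in Icc (a-τ) (a+τ), ((b + (s-a)^2) ^ ((3:ℝ)/8))⁻¹ ≤ 8 * τ ^ ((1:ℝ)/4) := by
  rw [← oneD_shift_val a τ hτ]
  apply integral_mono_of_nonneg
  · exact Filter.Eventually.of_forall fun s => by positivity
  · exact oneD_shift_integrable a τ hτ
  · have hae : ∀ᵐ s : ℝ ∂(volume.restrict (Icc (a-τ) (a+τ))), s ≠ a := by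
      refine ae_restrict_of_ae ?_
      have : ({a} : Set ℝ) = {s : ℝ | ¬ s ≠ a} := by ext; simp
      rw [MeasureTheory.ae_iff, ← this]
      exact measure_singleton a
    filter_upwards [hae] with s hs
    have hd : (0:ℝ) < |s - a| := abs_pos.mpr (sub_ne_zero.mpr hs)
    have key : |s - a| ^ ((3:ℝ)/4) ≤ (b + (s-a)^2) ^ ((3:ℝ)/8) := by
      have e1 : |s - a| ^ ((3:ℝ)/4) = ((s-a)^2) ^ ((3:ℝ)/8) := by
        rw [show ((s-a)^2 : ℝ) = |s-a| ^ (2:ℕ) by rw [sq_abs],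
          ← Real.rpow_natCast (|s - a|) 2, ← Real.rpow_mul (abs_nonneg _)]
        norm_num
      rw [e1]
      exact Real.rpow_le_rpow (by positivity) (by linarith [sq_nonneg (s-a)]) (by norm_num)
    have h2 : |s - a| ^ (-(3:ℝ)/4) = (|s - a| ^ ((3:ℝ)/4))⁻¹ := by
      rw [show (-(3:ℝ)/4) = -((3:ℝ)/4) by ring, Real.rpow_neg (abs_nonneg _)]
    rw [h2]
    exact inv_anti₀ (Real.rpow_pos_of_pos hd _) key

lemma prod_indicator_eq (S : Fin 4 → Set ℝ) (f : Fin 4 → ℝ → ℝ) (x : Fin 4 → ℝ) :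
    ∏ i, (S i).indicator (f i) (x i)
      = (Set.univ.pi S).indicator (fun x : Fin 4 → ℝ => ∏ i, f i (x i)) x := by
  by_cases hx : x ∈ Set.univ.pi S
  · rw [Set.indicator_of_mem hx]
    exact Finset.prod_congr rfl fun i _ => Set.indicator_of_mem (hx i (Set.mem_univ i)) _
  · rw [Set.indicator_of_notMem hx]
    rw [Set.mem_univ_pi] at hx
    push_neg at hx
    obtain ⟨i, hi⟩ := hx
    exact Finset.prod_eq_zero (Finset.mem_univ i) (Set.indicator_of_notMem hi _)

lemma box_integral_pi (f : Fin 4 → ℝ → ℝ) (S : Fin 4 → Set ℝ)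
    (hm : ∀ i, MeasurableSet (S i)) (hi : ∀ i, IntegrableOn (f i) (S i) volume) :
    (Integrable (fun x : Fin 4 → ℝ => ∏ i, f i (x i))
        (volume.restrict (Set.univ.pi S))) ∧
    ∫ x in Set.univ.pi S, ∏ i, f i (x i) = ∏ i, ∫ s in S i, f i s := by
  have hmeas : MeasurableSet (Set.univ.pi S) := MeasurableSet.univ_pi hm
  have hint : Integrable (fun x : Fin 4 → ℝ =>
      ∏ i, (S i).indicator (f i) (x i)) volume :=
    Integrable.fintype_prod fun i => (integrable_indicator_iff (hm i)).mpr (hi i)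
  have hfe : (fun x : Fin 4 → ℝ => ∏ i, (S i).indicator (f i) (x i))
      = (Set.univ.pi S).indicator (fun x : Fin 4 → ℝ => ∏ i, f i (x i)) :=
    funext fun x => prod_indicator_eq S f x
  constructor
  · have h : IntegrableOn (fun x : Fin 4 → ℝ => ∏ i, f i (x i)) (Set.univ.pi S) volume := by
      rw [← integrable_indicator_iff hmeas, ← hfe]
      exact hint
    exact h
  · rw [← MeasureTheory.integral_indicator hmeas, ← hfe,
      MeasureTheory.volume_pi, integral_fintype_prod_eq_prod (ι := Fin 4) (fun i => (S i).indicator (f i))]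
    exact Finset.prod_congr rfl fun i _ => MeasureTheory.integral_indicator (hm i)

lemma c4_pos : 0 < c4 := Real.rpow_pos_of_pos (by positivity) _

lemma Ueps_eq {ε : ℝ} (hε : 0 < ε) (x₀ : E4) :
    Ueps ε x₀ = fun x => c4 * ε * (ε^2 + ‖x - x₀‖^2)⁻¹ := by
  funext x
  have hne : ε ≠ 0 := hε.ne'
  have hd : (0:ℝ) < ε^2 + ‖x - x₀‖^2 := by positivity
  simp only [Ueps, Ubub, norm_smul, norm_inv, Real.norm_eq_abs, abs_of_pos hε, mul_pow]
  field_simp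

lemma hasGradientAt_Ueps {ε : ℝ} (hε : 0 < ε) (x₀ y : E4) :
    HasGradientAt (Ueps ε x₀)
      ((-2 * c4 * ε * (((ε^2 + ‖y - x₀‖^2)^2)⁻¹)) • (y - x₀)) y := by
  rw [Ueps_eq hε]
  have hid : HasFDerivAt (fun x : E4 => x - x₀) (ContinuousLinearMap.id ℝ E4) y :=
    (hasFDerivAt_id y).sub_const x₀
  have hnorm := hid.norm_sq
  have hd : HasFDerivAt (fun x : E4 => ε^2 + ‖x - x₀‖^2)
      (2 • (innerSL ℝ (y - x₀)).comp (ContinuousLinearMap.id ℝ E4)) y := hnorm.const_add (ε^2)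
  have hpos : (0:ℝ) < ε^2 + ‖y - x₀‖^2 := by positivity
  have hinv := (hasFDerivAt_inv hpos.ne').comp y hd
  have hfinal := hinv.const_mul (c4 * ε)
  rw [hasGradientAt_iff_hasFDerivAt]
  refine HasFDerivAt.congr_fderiv hfinal ?_
  apply ContinuousLinearMap.ext
  intro w
  simp only [InnerProductSpace.toDual_apply_apply, ContinuousLinearMap.smul_apply,
    ContinuousLinearMap.coe_smul', Pi.smul_apply, ContinuousLinearMap.coe_comp',
    Function.comp_apply, ContinuousLinearMap.coe_id', id_eq, innerSL_apply_apply, ContinuousLinearMap.toSpanSingleton_apply,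
    inner_smul_left, map_inv₀, conj_trivial, smul_eq_mul, two_smul,
    ContinuousLinearMap.smulRight_apply, ContinuousLinearMap.one_apply,
    ContinuousLinearMap.add_apply]
  ring

lemma gradient_Ueps {ε : ℝ} (hε : 0 < ε) (x₀ y : E4) :
    gradient (Ueps ε x₀) y
      = (-2 * c4 * ε * (((ε^2 + ‖y - x₀‖^2)^2)⁻¹)) • (y - x₀) :=
  (hasGradientAt_Ueps hε x₀ y).gradient

lemma grad_norm_le {ε : ℝ} (hε : 0 < ε) (x₀ y : E4) :
    ‖gradient (Ueps ε x₀) y‖ ≤ 2 * c4 * ε * (((ε^2 + ‖y - x₀‖^2) ^ ((3:ℝ)/2))⁻¹) := by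
  rw [gradient_Ueps hε x₀ y, norm_smul, Real.norm_eq_abs]
  set r : ℝ := ‖y - x₀‖ with hr
  have hr0 : 0 ≤ r := norm_nonneg _
  have hd : (0:ℝ) < ε^2 + r^2 := by positivity
  have hc4 := c4_pos
  have habs : |(-2 * c4 * ε * (((ε^2 + r^2)^2)⁻¹))| = 2 * c4 * ε * (((ε^2 + r^2)^2)⁻¹) := by
    rw [show (-2 * c4 * ε * (((ε^2 + r^2)^2)⁻¹)) = -(2 * c4 * ε * (((ε^2 + r^2)^2)⁻¹)) by ring,
      abs_neg, abs_of_nonneg (by positivity)]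
  rw [habs]
  set d : ℝ := ε^2 + r^2 with hdd
  have h32 : (0:ℝ) < d ^ ((3:ℝ)/2) := Real.rpow_pos_of_pos hd _
  have h2 : (0:ℝ) < d^2 := by positivity
  have hrle : r ≤ d ^ ((1:ℝ)/2) := by
    have e : r = (r^2) ^ ((1:ℝ)/2) := by
      rw [← Real.rpow_natCast r 2, ← Real.rpow_mul hr0]
      norm_num
    rw [e]
    exact Real.rpow_le_rpow (by positivity) (by nlinarith [sq_nonneg ε]) (by norm_num)
  have hsplit : (d:ℝ)^2 = d ^ ((1:ℝ)/2) * d ^ ((3:ℝ)/2) := by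
    rw [← Real.rpow_add hd, ← Real.rpow_natCast d 2]
    norm_num
  have key : r * d ^ ((3:ℝ)/2) ≤ d^2 := by
    rw [hsplit]
    exact mul_le_mul_of_nonneg_right hrle h32.le
  have hfrac : r / d^2 ≤ 1 / d^((3:ℝ)/2) :=
    (div_le_div_iff₀ h2 h32).mpr (by rw [one_mul]; exact key)
  calc 2 * c4 * ε * ((d^2)⁻¹) * r = (2*c4*ε) * (r / d^2) := by ring
    _ ≤ (2*c4*ε) * (1 / d^((3:ℝ)/2)) := by
        exact mul_le_mul_of_nonneg_left hfrac (by positivity)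
    _ = 2 * c4 * ε * ((d ^ ((3:ℝ)/2))⁻¹) := by ring

lemma normsq_eq (v : E4) : ‖v‖^2 = ∑ i, (v i)^2 := by
  rw [EuclideanSpace.norm_eq, Real.sq_sqrt (by positivity)]
  simp [sq_abs]

lemma coord_sq_le (v : E4) (i : Fin 4) : (v i)^2 ≤ ‖v‖^2 := by
  rw [normsq_eq]
  exact Finset.single_le_sum (fun j _ => sq_nonneg (v j)) (Finset.mem_univ i)

lemma prod_rpow_le {ε : ℝ} (hε : 0 < ε) (c y : E4) :
    ∏ i, (ε^2/4 + (y i - c i)^2) ^ ((3:ℝ)/8) ≤ (ε^2 + ‖y - c‖^2) ^ ((3:ℝ)/2) := by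
  set d : ℝ := ε^2 + ‖y - c‖^2 with hdd
  have hd : (0:ℝ) < d := by positivity
  have hsub : ∀ i, (y - c) i = y i - c i := fun i => rfl
  have hu : ∀ i, 0 ≤ ε^2/4 + (y i - c i)^2 := fun i => by positivity
  have hud : ∀ i, ε^2/4 + (y i - c i)^2 ≤ d := by
    intro i
    have h1 : (y i - c i)^2 ≤ ‖y - c‖^2 := by rw [← hsub i]; exact coord_sq_le (y - c) i
    have h2 : ε^2/4 ≤ ε^2 := by nlinarith [sq_nonneg ε]
    simp only [hdd]; linarith
  calc ∏ i, (ε^2/4 + (y i - c i)^2) ^ ((3:ℝ)/8)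
      = (∏ i, (ε^2/4 + (y i - c i)^2)) ^ ((3:ℝ)/8) :=
        Real.finset_prod_rpow _ _ (fun i _ => hu i) _
    _ ≤ (d^4) ^ ((3:ℝ)/8) := by
        apply Real.rpow_le_rpow (Finset.prod_nonneg (fun i _ => hu i)) ?_ (by norm_num)
        calc ∏ i, (ε^2/4 + (y i - c i)^2) ≤ ∏ _i : Fin 4, d :=
              Finset.prod_le_prod (fun i _ => hu i) (fun i _ => hud i)
          _ = d^4 := by simp [Finset.prod_const]
    _ = d ^ ((3:ℝ)/2) := by
        rw [← Real.rpow_natCast d 4, ← Real.rpow_mul hd.le]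
        norm_num

lemma norm_e1 : ‖e1‖ = 1 := by
  simp [e1, EuclideanSpace.norm_single]

lemma inner_bound {ε τ t : ℝ} (hε : 0 < ε) (hετ : ε ≤ τ) (hτt : τ ≤ t/2) {y : E4}
    (hy : y ∈ Metric.ball (t • e1) τ) :
    |⟪gradient (Ueps ε (t • e1)) y, gradient (Ueps ε (-(t • e1))) y⟫|
      ≤ (4*c4^2*ε^2*(t^3)⁻¹) * ∏ i, ((ε^2/4 + (y i - (t • e1) i)^2) ^ ((3:ℝ)/8))⁻¹ := by
  have ht : 0 < t := by linarith
  have hc4 := c4_pos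
  set c : E4 := t • e1 with hc
  have hyc : ‖y - c‖ < τ := by
    rw [← dist_eq_norm]; exact Metric.mem_ball.mp hy
  -- first factor
  have hP : (0:ℝ) < ∏ i, (ε^2/4 + (y i - c i)^2) ^ ((3:ℝ)/8) :=
    Finset.prod_pos fun i _ => Real.rpow_pos_of_pos (by positivity) _
  have h1 : ‖gradient (Ueps ε c) y‖
      ≤ 2 * c4 * ε * (∏ i, (ε^2/4 + (y i - c i)^2) ^ ((3:ℝ)/8))⁻¹ := by
    refine (grad_norm_le hε c y).trans ?_
    have := inv_anti₀ hP (prod_rpow_le hε c y)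
    have h2c : 0 ≤ 2 * c4 * ε := by positivity
    exact mul_le_mul_of_nonneg_left this h2c
  -- second factor
  have hnormyc : t ≤ ‖y - (-c)‖ := by
    have hcc : ‖c‖ = t := by
      rw [hc, norm_smul, Real.norm_eq_abs, abs_of_pos ht, norm_e1, mul_one]
    have e : y - (-c) = (2:ℝ) • c + (y - c) := by
      rw [two_smul]; abel
    have h2c : ‖(2:ℝ) • c‖ = 2 * t := by
      rw [norm_smul, Real.norm_eq_abs, hcc]; norm_num
    have htri0 := norm_sub_norm_le ((2:ℝ) • c) (-(y - c))
    simp only [sub_neg_eq_add, norm_neg] at htri0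
    have htri : ‖(2:ℝ) • c‖ - ‖y - c‖ ≤ ‖(2:ℝ) • c + (y - c)‖ := htri0
    rw [e]
    rw [h2c] at htri
    linarith
  have h2 : ‖gradient (Ueps ε (-c)) y‖ ≤ 2 * c4 * ε * (t^3)⁻¹ := by
    refine (grad_norm_le hε (-c) y).trans ?_
    have hd2 : t^2 ≤ ε^2 + ‖y - (-c)‖^2 := by
      nlinarith [sq_nonneg ε, hnormyc, norm_nonneg (y - (-c))]
    have hkey : t^3 ≤ (ε^2 + ‖y - (-c)‖^2) ^ ((3:ℝ)/2) := by
      have : (t^2 : ℝ) ^ ((3:ℝ)/2) ≤ (ε^2 + ‖y - (-c)‖^2) ^ ((3:ℝ)/2) :=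
        Real.rpow_le_rpow (by positivity) hd2 (by norm_num)
      calc (t:ℝ)^3 = (t^2) ^ ((3:ℝ)/2) := by
            rw [← Real.rpow_natCast t 2, ← Real.rpow_mul ht.le,
              show ((2:ℕ):ℝ)*((3:ℝ)/2) = ((3:ℕ):ℝ) by norm_num, Real.rpow_natCast]
        _ ≤ _ := this
    have := inv_anti₀ (by positivity) hkey
    exact mul_le_mul_of_nonneg_left this (by positivity)
  calc |⟪gradient (Ueps ε c) y, gradient (Ueps ε (-c)) y⟫|
      ≤ ‖gradient (Ueps ε c) y‖ * ‖gradient (Ueps ε (-c)) y‖ := abs_real_inner_le_norm _ _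
    _ ≤ (2 * c4 * ε * (∏ i, (ε^2/4 + (y i - c i)^2) ^ ((3:ℝ)/8))⁻¹) * (2 * c4 * ε * (t^3)⁻¹) := by
        apply mul_le_mul h1 h2 (norm_nonneg _) (by positivity)
    _ = (4*c4^2*ε^2*(t^3)⁻¹) * (∏ i, (ε^2/4 + (y i - c i)^2) ^ ((3:ℝ)/8))⁻¹ := by ring
    _ = (4*c4^2*ε^2*(t^3)⁻¹) * ∏ i, ((ε^2/4 + (y i - c i)^2) ^ ((3:ℝ)/8))⁻¹ := by
        rw [← Finset.prod_inv_distrib]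

/-- There is `C > 0` such that for `0 < ε ≤ τ ≤ t/2`,
`|∫_{B_τ(te₁)} ∇U_{ε,te₁} · ∇U_{ε,-te₁}| ≤ C ε² τ/t³`. -/
theorem stmt17 :
    ∃ C : ℝ, 0 < C ∧ ∀ ε τ t : ℝ, 0 < ε → ε ≤ τ → τ ≤ t / 2 →
      |∫ y in Metric.ball (t • e1) τ,
          ⟪gradient (Ueps ε (t • e1)) y, gradient (Ueps ε (-(t • e1))) y⟫|
        ≤ C * ε ^ 2 * τ / t ^ 3 := by
  have hc4 := c4_pos
  refine ⟨16384 * c4^2, by positivity, ?_⟩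
  intro ε τ t hε hετ hτt
  have ht : 0 < t := by linarith
  have hτ0 : 0 < τ := lt_of_lt_of_le hε hετ
  set c : E4 := t • e1 with hc
  set S : Fin 4 → Set ℝ := fun i => Icc (c i - τ) (c i + τ) with hS
  set f : Fin 4 → ℝ → ℝ := fun i s => ((ε^2/4 + (s - c i)^2) ^ ((3:ℝ)/8))⁻¹ with hf
  have hb : (0:ℝ) < ε^2/4 := by positivity
  have hfi : ∀ i, IntegrableOn (f i) (S i) volume := fun i =>
    oneD_cont_integrable (c i) (ε^2/4) τ hb
  have hfb : ∀ i, ∫ s in S i, f i s ≤ 8 * τ ^ ((1:ℝ)/4) := fun i =>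
    oneD_bound (c i) (ε^2/4) τ hb hτ0.le
  have hfnn : ∀ i, (0:ℝ) ≤ ∫ s in S i, f i s := fun i =>
    setIntegral_nonneg measurableSet_Icc (fun s _ => by positivity)
  have hm : ∀ i, MeasurableSet (S i) := fun i => measurableSet_Icc
  obtain ⟨hPiInt, hPiVal⟩ := box_integral_pi f S hm hfi
  set e : E4 ≃ᵐ (Fin 4 → ℝ) := (MeasurableEquiv.toLp 2 (Fin 4 → ℝ)).symm with he
  have hmp : MeasurePreserving e volume volume :=
    EuclideanSpace.volume_preserving_symm_measurableEquiv_toLp (Fin 4)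
  have hemb : MeasurableEmbedding e := e.measurableEmbedding
  set Box : Set E4 := e ⁻¹' (Set.univ.pi S) with hBox
  have happ : ∀ (y : E4) (i : Fin 4), (e y) i = y i := fun y i => rfl
  have hBoxInt : IntegrableOn (fun y : E4 => ∏ i, f i (y i)) Box volume := by
    have : IntegrableOn ((fun x : Fin 4 → ℝ => ∏ i, f i (x i)) ∘ e) (e ⁻¹' (Set.univ.pi S))
        volume := (hmp.integrableOn_comp_preimage hemb).mpr hPiInt
    exact this
  have hBoxVal : ∫ y in Box, ∏ i, f i (y i) = ∏ i, ∫ s in S i, f i s := by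
    rw [← hPiVal]
    exact hmp.setIntegral_preimage_emb hemb (fun x : Fin 4 → ℝ => ∏ i, f i (x i)) (Set.univ.pi S)
  have hsub : Metric.ball c τ ⊆ Box := by
    intro y hy
    have hyc : ‖y - c‖ < τ := by rw [← dist_eq_norm]; exact Metric.mem_ball.mp hy
    intro i _
    have h1 : (y i - c i)^2 ≤ ‖y - c‖^2 := coord_sq_le (y - c) i
    have h2 : |y i - c i| ≤ ‖y - c‖ := by
      rw [← abs_of_nonneg (norm_nonneg (y - c)), ← Real.sqrt_sq_eq_abs, ← Real.sqrt_sq_eq_abs]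
      exact Real.sqrt_le_sqrt h1
    have := abs_le.mp (h2.trans hyc.le)
    simp only [happ]
    constructor <;> [linarith [this.1]; linarith [this.2]]
  set K : ℝ := 4*c4^2*ε^2*(t^3)⁻¹ with hK
  have hKnn : 0 ≤ K := by positivity
  set G : E4 → ℝ := fun y => K * ∏ i, f i (y i) with hG
  have hGnn : ∀ y, 0 ≤ G y := fun y => by
    apply mul_nonneg hKnn (Finset.prod_nonneg fun i _ => by positivity)
  have hGBoxInt : IntegrableOn G Box volume := (hBoxInt.const_mul K)
  have hGBallInt : IntegrableOn G (Metric.ball c τ) volume := hGBoxInt.mono_set hsub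
  -- main chain
  calc |∫ y in Metric.ball c τ,
          ⟪gradient (Ueps ε c) y, gradient (Ueps ε (-c)) y⟫|
      ≤ ∫ y in Metric.ball c τ,
          ‖⟪gradient (Ueps ε c) y, gradient (Ueps ε (-c)) y⟫‖ := by
        rw [← Real.norm_eq_abs]
        exact norm_integral_le_integral_norm _
    _ ≤ ∫ y in Metric.ball c τ, G y := by
        apply integral_mono_of_nonneg
        · exact Filter.Eventually.of_forall fun y => norm_nonneg _
        · exact hGBallInt
        · rw [Filter.EventuallyLE, ae_restrict_iff' measurableSet_ball]
          refine Filter.Eventually.of_forall fun y hy => ?_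
          rw [Real.norm_eq_abs]
          exact inner_bound hε hετ hτt hy
    _ ≤ ∫ y in Box, G y := setIntegral_mono_set hGBoxInt
        (Filter.Eventually.of_forall fun y => hGnn y)
        (HasSubset.Subset.eventuallyLE hsub)
    _ = K * ∏ i, ∫ s in S i, f i s := by rw [hG, MeasureTheory.integral_const_mul, hBoxVal]
    _ ≤ K * (4096 * τ) := by
        apply mul_le_mul_of_nonneg_left ?_ hKnn
        have hp : ∏ i, ∫ s in S i, f i s ≤ ∏ _i : Fin 4, (8 * τ ^ ((1:ℝ)/4)) :=
          Finset.prod_le_prod (fun i _ => hfnn i) (fun i _ => hfb i)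
        refine hp.trans ?_
        rw [Finset.prod_const]
        have : (8 * τ ^ ((1:ℝ)/4))^(Finset.univ : Finset (Fin 4)).card
            = 4096 * (τ ^ ((1:ℝ)/4))^(4:ℕ) := by
          simp [Finset.card_univ]
          ring
        rw [this, ← Real.rpow_natCast (τ ^ ((1:ℝ)/4)) 4, ← Real.rpow_mul hτ0.le]
        norm_num
    _ = 16384 * c4^2 * ε ^ 2 * τ / t ^ 3 := by rw [hK]; ring
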